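/- If $\kappa_1 > 0$ and $\kappa_1 + 4\kappa_2 > 0$, then for every $\xi \in (0, 2\pi]$ the matrix $\widehat{\mathcal{A}}(\xi) = A_0 + e^{-i\xi}A_1 + e^{i\xi}A_1^{\intercal}$ is Hermitian positive semidefinite. -/

import Mathlib

open Matrix Complex Real
open scoped ComplexOrder

noncomputable def A0 (M : ℕ) (κ1 κ2 : ℝ) : Matrix (Fin M) (Fin M) ℂ := fun i j =>
  if (i : ℤ) = (j : ℤ) then 2 * ((κ1 : ℂ) + κ2)
  else if |(i : ℤ) - (j : ℤ)| = 1 then -(κ1 : ℂ)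
  else if |(i : ℤ) - (j : ℤ)| = 2 then -(κ2 : ℂ) else 0

noncomputable def A1 (M : ℕ) (κ1 κ2 : ℝ) : Matrix (Fin M) (Fin M) ℂ := fun i j =>
  if (i : ℕ) = 0 ∧ (j : ℕ) = M - 1 then -(κ1 : ℂ)
  else if ((i : ℕ) = 0 ∧ (j : ℕ) = M - 2) ∨ ((i : ℕ) = 1 ∧ (j : ℕ) = M - 1) then -(κ2 : ℂ)
  else 0

noncomputable def Ahat (M : ℕ) (κ1 κ2 ξ : ℝ) : Matrix (Fin M) (Fin M) ℂ :=
  A0 M κ1 κ2 + Complex.exp (-(ξ : ℂ) * Complex.I) • A1 M κ1 κ2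
    + Complex.exp ((ξ : ℂ) * Complex.I) • (A1 M κ1 κ2)ᵀ

noncomputable def q1 (M : ℕ) : Fin M → ℂ := fun _ => (1 / Real.sqrt M : ℝ)

noncomputable def Umat (M : ℕ) (ξ : ℝ) : Matrix (Fin M) (Fin M) ℂ := fun i j =>
  if (i : ℕ) = ((j : ℕ) + 1) % M then
    (if (i : ℕ) = 0 then Complex.exp (-(ξ : ℂ) * Complex.I) else 1) else 0

lemma conj_eps (ξ : ℝ) :
    (starRingEnd ℂ) (Complex.exp (-(ξ : ℂ) * Complex.I)) = Complex.exp ((ξ : ℂ) * Complex.I) := by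
  rw [← Complex.exp_conj]
  congr 1
  simp only [map_neg, _root_.map_mul, Complex.conj_I, Complex.conj_ofReal]
  ring

lemma conj_eps_mul (ξ : ℝ) :
    (starRingEnd ℂ) (Complex.exp (-(ξ : ℂ) * Complex.I)) * Complex.exp (-(ξ : ℂ) * Complex.I)
      = 1 := by
  rw [conj_eps, ← Complex.exp_add]
  ring_nf
  exact Complex.exp_zero

lemma succ_mod (M : ℕ) (a : ℕ) (ha : a < M) :
    (a + 1) % M = a + 1 ∨ (a + 1 = M ∧ (a + 1) % M = 0) := by
  rcases eq_or_lt_of_le (Nat.succ_le_of_lt ha) with h | h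
  · right
    have h' : a + 1 = M := h
    exact ⟨h', by rw [h']; exact Nat.mod_self M⟩
  · left; exact Nat.mod_eq_of_lt h

lemma UhU (M : ℕ) (hM : 2 ≤ M) (ξ : ℝ) : (Umat M ξ)ᴴ * Umat M ξ = 1 := by
  ext i j
  rw [Matrix.mul_apply]
  have hlt : ((i : ℕ) + 1) % M < M := Nat.mod_lt _ (show 0 < M by omega)
  rw [Finset.sum_eq_single (⟨((i : ℕ) + 1) % M, hlt⟩ : Fin M)]
  · by_cases hij : i = j
    · subst hij
      simp only [Umat, Matrix.conjTranspose_apply, Matrix.one_apply_eq, if_pos rfl]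
      by_cases h0 : (((i:ℕ)+1) % M) = 0
      · simp only [h0, if_pos rfl]; exact conj_eps_mul ξ
      · simp [h0]
    · have : ¬ ((((i:ℕ)+1) % M : ℕ) = ((j:ℕ)+1) % M) := by
        intro h
        apply hij
        have hi := succ_mod M i i.isLt
        have hj := succ_mod M j j.isLt
        have : (i : ℕ) = (j : ℕ) := by omega
        exact Fin.ext this
      simp [Umat, Matrix.one_apply, hij, this]
  · intro b _ hb
    have : ¬ ((b : ℕ) = ((i:ℕ)+1) % M) := by
      intro h; exact hb (Fin.ext h)
    simp [Umat, Matrix.conjTranspose_apply, this]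
  · intro h; exact absurd (Finset.mem_univ _) h

lemma Umat_apply (M : ℕ) (hM : 5 ≤ M) (ξ : ℝ) (i j : Fin M) :
    Umat M ξ i j =
      if (i:ℕ) = (j:ℕ) + 1 ∨ ((j:ℕ) + 1 = M ∧ (i:ℕ) = 0)
      then (if (i:ℕ) = 0 then Complex.exp (-(ξ:ℂ) * Complex.I) else 1) else 0 := by
  have hj := succ_mod M j j.isLt
  have hi := i.isLt
  have hlt : ((j:ℕ)+1) % M < M := Nat.mod_lt _ (show 0 < M by omega)
  simp only [Umat]
  by_cases h : (i:ℕ) = ((j:ℕ)+1) % M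
  · have hc : (i:ℕ) = (j:ℕ)+1 ∨ ((j:ℕ)+1 = M ∧ (i:ℕ) = 0) := by omega
    rw [if_pos h, if_pos hc]
  · have hc : ¬((i:ℕ) = (j:ℕ)+1 ∨ ((j:ℕ)+1 = M ∧ (i:ℕ) = 0)) := by omega
    rw [if_neg h, if_neg hc]

lemma Usq_apply (M : ℕ) (hM : 5 ≤ M) (ξ : ℝ) (i j : Fin M) :
    (Umat M ξ * Umat M ξ) i j =
      if (i:ℕ) = (j:ℕ) + 2 ∨ ((j:ℕ) + 2 = M ∧ (i:ℕ) = 0) ∨ ((j:ℕ) + 1 = M ∧ (i:ℕ) = 1)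
      then (if (i:ℕ) = 0 ∨ (i:ℕ) = 1 then Complex.exp (-(ξ:ℂ) * Complex.I) else 1) else 0 := by
  rw [Matrix.mul_apply]
  have hlt : ((j : ℕ) + 1) % M < M := Nat.mod_lt _ (show 0 < M by omega)
  rw [Finset.sum_eq_single (⟨((j : ℕ) + 1) % M, hlt⟩ : Fin M)]
  · have hj := succ_mod M j j.isLt
    have hi := i.isLt
    have hjj := j.isLt
    have hlt2 : ((j:ℕ)+1+1) % M < M := Nat.mod_lt _ (show 0 < M by omega)
    simp only [Umat, Nat.mod_add_mod, eq_self_iff_true, if_true]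
    have h2 : ((j:ℕ)+1+1) % M = (j:ℕ)+1+1 ∨ ((j:ℕ)+1+1 = M ∧ ((j:ℕ)+1+1) % M = 0)
        ∨ ((j:ℕ)+1+1 = M+1 ∧ ((j:ℕ)+1+1) % M = 1) := by
      rcases hj with hj | hj
      · have h3 := succ_mod M ((j:ℕ)+1) (by omega)
        omega
      · right; right
        refine ⟨by omega, ?_⟩
        have he : (j:ℕ)+1+1 = M + 1 := by omega
        rw [he, Nat.add_mod_left]
        exact Nat.mod_eq_of_lt (by omega)
    by_cases h : (i:ℕ) = ((j:ℕ)+1+1) % M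
    · have hc : (i:ℕ) = (j:ℕ) + 2 ∨ ((j:ℕ) + 2 = M ∧ (i:ℕ) = 0)
          ∨ ((j:ℕ) + 1 = M ∧ (i:ℕ) = 1) := by omega
      rw [if_pos h, if_pos hc]
      by_cases h0 : (i:ℕ) = 0
      · have hz : ¬ ((j:ℕ)+1) % M = 0 := by omega
        rw [if_pos h0, if_neg hz, if_pos (Or.inl h0), mul_one]
      · by_cases h1' : (i:ℕ) = 1
        · have hz : ((j:ℕ)+1) % M = 0 := by omega
          rw [if_neg h0, if_pos hz, if_pos (Or.inr h1'), one_mul]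
        · have hz : ¬ ((j:ℕ)+1) % M = 0 := by omega
          have h01 : ¬ ((i:ℕ) = 0 ∨ (i:ℕ) = 1) := by omega
          rw [if_neg h0, if_neg hz, if_neg h01, one_mul]
    · have hc : ¬ ((i:ℕ) = (j:ℕ) + 2 ∨ ((j:ℕ) + 2 = M ∧ (i:ℕ) = 0)
          ∨ ((j:ℕ) + 1 = M ∧ (i:ℕ) = 1)) := by omega
      rw [if_neg h, if_neg hc, zero_mul]
  · intro b _ hb
    have : ¬ ((b : ℕ) = ((j:ℕ)+1) % M) := by
      intro h; exact hb (Fin.ext h)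
    simp only [Umat, this, if_false, mul_zero]
  · intro h; exact absurd (Finset.mem_univ _) h

lemma psd_term {M : ℕ} (c : ℝ) (hc : 0 ≤ c) (B : Matrix (Fin M) (Fin M) ℂ) :
    ((c : ℂ) • (Bᴴ * B)).PosSemidef := by
  have h := Matrix.posSemidef_conjTranspose_mul_self B
  refine Matrix.posSemidef_iff_dotProduct_mulVec.mpr ⟨?_, ?_⟩
  · unfold Matrix.IsHermitian
    rw [Matrix.conjTranspose_smul, h.1]
    congr 1
    exact Complex.conj_ofReal c
  · intro x
    rw [Matrix.smul_mulVec, dotProduct_smul, smul_eq_mul]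
    exact mul_nonneg (by exact_mod_cast hc) (h.dotProduct_mulVec_nonneg x)

lemma BB_eq (M : ℕ) (hM : 5 ≤ M) (ξ : ℝ) :
    (1 - Umat M ξ)ᴴ * (1 - Umat M ξ) = 1 + 1 - Umat M ξ - (Umat M ξ)ᴴ := by
  have hU := UhU M (by omega) ξ
  rw [Matrix.conjTranspose_sub, Matrix.conjTranspose_one, Matrix.sub_mul, Matrix.one_mul,
    Matrix.mul_sub, Matrix.mul_one, hU]
  abel

lemma CC_eq (M : ℕ) (hM : 5 ≤ M) (ξ : ℝ) :
    (1 - Umat M ξ * Umat M ξ)ᴴ * (1 - Umat M ξ * Umat M ξ)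
      = 1 + 1 - Umat M ξ * Umat M ξ - (Umat M ξ * Umat M ξ)ᴴ := by
  have hU := UhU M (by omega) ξ
  have hUU : (Umat M ξ * Umat M ξ)ᴴ * (Umat M ξ * Umat M ξ) = 1 := by
    rw [Matrix.conjTranspose_mul]
    calc (Umat M ξ)ᴴ * (Umat M ξ)ᴴ * (Umat M ξ * Umat M ξ)
        = (Umat M ξ)ᴴ * (((Umat M ξ)ᴴ * Umat M ξ) * Umat M ξ) := by
          simp only [Matrix.mul_assoc]
      _ = 1 := by rw [hU, Matrix.one_mul, hU]
  rw [Matrix.conjTranspose_sub, Matrix.conjTranspose_one, Matrix.sub_mul, Matrix.one_mul,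
    Matrix.mul_sub, Matrix.mul_one, hUU]
  abel

set_option maxHeartbeats 1000000 in
lemma Ahat_decomp (M : ℕ) (hM : 5 ≤ M) (κ1 κ2 ξ : ℝ) :
    Ahat M κ1 κ2 ξ
      = (κ1 : ℂ) • ((1 - Umat M ξ)ᴴ * (1 - Umat M ξ))
        + (κ2 : ℂ) • ((1 - Umat M ξ * Umat M ξ)ᴴ * (1 - Umat M ξ * Umat M ξ)) := by
  rw [BB_eq M hM ξ, CC_eq M hM ξ]
  ext i j
  have hi := i.isLt
  have hj := j.isLt
  simp only [Ahat, A0, A1, Matrix.add_apply, Matrix.sub_apply, Matrix.smul_apply,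
    Matrix.one_apply, Matrix.transpose_apply, Matrix.conjTranspose_apply,
    Umat_apply M hM ξ, Usq_apply M hM ξ, smul_eq_mul, RCLike.star_def,
    apply_ite (starRingEnd ℂ), _root_.map_one, _root_.map_zero, conj_eps, Fin.ext_iff,
    abs_eq (by norm_num : (0:ℤ) ≤ 1), abs_eq (by norm_num : (0:ℤ) ≤ 2)]
  by_cases hr0 : (i:ℕ) = (j:ℕ)
  · have c1 : ((i:ℕ):ℤ) = ((j:ℕ):ℤ) := by omega
    have c2 : ¬ (((i:ℕ):ℤ) - ((j:ℕ):ℤ) = 1 ∨ ((i:ℕ):ℤ) - ((j:ℕ):ℤ) = -1) := by omega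
    have c3 : ¬ (((i:ℕ):ℤ) - ((j:ℕ):ℤ) = 2 ∨ ((i:ℕ):ℤ) - ((j:ℕ):ℤ) = -2) := by omega
    have c4 : ¬ ((i:ℕ) = 0 ∧ (j:ℕ) = M - 1) := by omega
    have c5 : ¬ ((i:ℕ) = 0 ∧ (j:ℕ) = M - 2 ∨ (i:ℕ) = 1 ∧ (j:ℕ) = M - 1) := by omega
    have c6 : ¬ ((j:ℕ) = 0 ∧ (i:ℕ) = M - 1) := by omega
    have c7 : ¬ ((j:ℕ) = 0 ∧ (i:ℕ) = M - 2 ∨ (j:ℕ) = 1 ∧ (i:ℕ) = M - 1) := by omega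
    have c8 : (i:ℕ) = (j:ℕ) := by omega
    have c9 : ¬ ((i:ℕ) = (j:ℕ) + 1 ∨ (j:ℕ) + 1 = M ∧ (i:ℕ) = 0) := by omega
    have c10 : ¬ ((j:ℕ) = (i:ℕ) + 1 ∨ (i:ℕ) + 1 = M ∧ (j:ℕ) = 0) := by omega
    have c11 : ¬ ((i:ℕ) = (j:ℕ) + 2 ∨ (j:ℕ) + 2 = M ∧ (i:ℕ) = 0 ∨ (j:ℕ) + 1 = M ∧ (i:ℕ) = 1) := by omega
    have c12 : ¬ ((j:ℕ) = (i:ℕ) + 2 ∨ (i:ℕ) + 2 = M ∧ (j:ℕ) = 0 ∨ (i:ℕ) + 1 = M ∧ (j:ℕ) = 1) := by omega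
    simp only [eq_true c1, eq_false c2, eq_false c3, eq_false c4, eq_false c5, eq_false c6, eq_false c7, eq_true c8, eq_false c9, eq_false c10, eq_false c11, eq_false c12, if_true, if_false]
    ring1
  by_cases hr1 : (i:ℕ) = (j:ℕ) + 1
  · have c1 : ¬ (((i:ℕ):ℤ) = ((j:ℕ):ℤ)) := by omega
    have c2 : ((i:ℕ):ℤ) - ((j:ℕ):ℤ) = 1 ∨ ((i:ℕ):ℤ) - ((j:ℕ):ℤ) = -1 := by omega
    have c3 : ¬ (((i:ℕ):ℤ) - ((j:ℕ):ℤ) = 2 ∨ ((i:ℕ):ℤ) - ((j:ℕ):ℤ) = -2) := by omega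
    have c4 : ¬ ((i:ℕ) = 0 ∧ (j:ℕ) = M - 1) := by omega
    have c5 : ¬ ((i:ℕ) = 0 ∧ (j:ℕ) = M - 2 ∨ (i:ℕ) = 1 ∧ (j:ℕ) = M - 1) := by omega
    have c6 : ¬ ((j:ℕ) = 0 ∧ (i:ℕ) = M - 1) := by omega
    have c7 : ¬ ((j:ℕ) = 0 ∧ (i:ℕ) = M - 2 ∨ (j:ℕ) = 1 ∧ (i:ℕ) = M - 1) := by omega
    have c8 : ¬ ((i:ℕ) = (j:ℕ)) := by omega
    have c9 : (i:ℕ) = (j:ℕ) + 1 ∨ (j:ℕ) + 1 = M ∧ (i:ℕ) = 0 := by omega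
    have c10 : ¬ ((j:ℕ) = (i:ℕ) + 1 ∨ (i:ℕ) + 1 = M ∧ (j:ℕ) = 0) := by omega
    have c11 : ¬ ((i:ℕ) = (j:ℕ) + 2 ∨ (j:ℕ) + 2 = M ∧ (i:ℕ) = 0 ∨ (j:ℕ) + 1 = M ∧ (i:ℕ) = 1) := by omega
    have c12 : ¬ ((j:ℕ) = (i:ℕ) + 2 ∨ (i:ℕ) + 2 = M ∧ (j:ℕ) = 0 ∨ (i:ℕ) + 1 = M ∧ (j:ℕ) = 1) := by omega
    simp only [eq_false c1, eq_true c2, eq_false c3, eq_false c4, eq_false c5, eq_false c6, eq_false c7, eq_false c8, eq_true c9, eq_false c10, eq_false c11, eq_false c12, if_true, if_false]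
    have c13 : ¬ ((i:ℕ) = 0) := by omega
    simp only [eq_false c13, if_true, if_false]
    ring1
  by_cases hr2 : (j:ℕ) = (i:ℕ) + 1
  · have c1 : ¬ (((i:ℕ):ℤ) = ((j:ℕ):ℤ)) := by omega
    have c2 : ((i:ℕ):ℤ) - ((j:ℕ):ℤ) = 1 ∨ ((i:ℕ):ℤ) - ((j:ℕ):ℤ) = -1 := by omega
    have c3 : ¬ (((i:ℕ):ℤ) - ((j:ℕ):ℤ) = 2 ∨ ((i:ℕ):ℤ) - ((j:ℕ):ℤ) = -2) := by omega
    have c4 : ¬ ((i:ℕ) = 0 ∧ (j:ℕ) = M - 1) := by omega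
    have c5 : ¬ ((i:ℕ) = 0 ∧ (j:ℕ) = M - 2 ∨ (i:ℕ) = 1 ∧ (j:ℕ) = M - 1) := by omega
    have c6 : ¬ ((j:ℕ) = 0 ∧ (i:ℕ) = M - 1) := by omega
    have c7 : ¬ ((j:ℕ) = 0 ∧ (i:ℕ) = M - 2 ∨ (j:ℕ) = 1 ∧ (i:ℕ) = M - 1) := by omega
    have c8 : ¬ ((i:ℕ) = (j:ℕ)) := by omega
    have c9 : ¬ ((i:ℕ) = (j:ℕ) + 1 ∨ (j:ℕ) + 1 = M ∧ (i:ℕ) = 0) := by omega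
    have c10 : (j:ℕ) = (i:ℕ) + 1 ∨ (i:ℕ) + 1 = M ∧ (j:ℕ) = 0 := by omega
    have c11 : ¬ ((i:ℕ) = (j:ℕ) + 2 ∨ (j:ℕ) + 2 = M ∧ (i:ℕ) = 0 ∨ (j:ℕ) + 1 = M ∧ (i:ℕ) = 1) := by omega
    have c12 : ¬ ((j:ℕ) = (i:ℕ) + 2 ∨ (i:ℕ) + 2 = M ∧ (j:ℕ) = 0 ∨ (i:ℕ) + 1 = M ∧ (j:ℕ) = 1) := by omega
    simp only [eq_false c1, eq_true c2, eq_false c3, eq_false c4, eq_false c5, eq_false c6, eq_false c7, eq_false c8, eq_false c9, eq_true c10, eq_false c11, eq_false c12, if_true, if_false]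
    have c13 : ¬ ((j:ℕ) = 0) := by omega
    simp only [eq_false c13, if_true, if_false]
    ring1
  by_cases hr3 : (i:ℕ) = (j:ℕ) + 2
  · have c1 : ¬ (((i:ℕ):ℤ) = ((j:ℕ):ℤ)) := by omega
    have c2 : ¬ (((i:ℕ):ℤ) - ((j:ℕ):ℤ) = 1 ∨ ((i:ℕ):ℤ) - ((j:ℕ):ℤ) = -1) := by omega
    have c3 : ((i:ℕ):ℤ) - ((j:ℕ):ℤ) = 2 ∨ ((i:ℕ):ℤ) - ((j:ℕ):ℤ) = -2 := by omega
    have c4 : ¬ ((i:ℕ) = 0 ∧ (j:ℕ) = M - 1) := by omega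
    have c5 : ¬ ((i:ℕ) = 0 ∧ (j:ℕ) = M - 2 ∨ (i:ℕ) = 1 ∧ (j:ℕ) = M - 1) := by omega
    have c6 : ¬ ((j:ℕ) = 0 ∧ (i:ℕ) = M - 1) := by omega
    have c7 : ¬ ((j:ℕ) = 0 ∧ (i:ℕ) = M - 2 ∨ (j:ℕ) = 1 ∧ (i:ℕ) = M - 1) := by omega
    have c8 : ¬ ((i:ℕ) = (j:ℕ)) := by omega
    have c9 : ¬ ((i:ℕ) = (j:ℕ) + 1 ∨ (j:ℕ) + 1 = M ∧ (i:ℕ) = 0) := by omega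
    have c10 : ¬ ((j:ℕ) = (i:ℕ) + 1 ∨ (i:ℕ) + 1 = M ∧ (j:ℕ) = 0) := by omega
    have c11 : (i:ℕ) = (j:ℕ) + 2 ∨ (j:ℕ) + 2 = M ∧ (i:ℕ) = 0 ∨ (j:ℕ) + 1 = M ∧ (i:ℕ) = 1 := by omega
    have c12 : ¬ ((j:ℕ) = (i:ℕ) + 2 ∨ (i:ℕ) + 2 = M ∧ (j:ℕ) = 0 ∨ (i:ℕ) + 1 = M ∧ (j:ℕ) = 1) := by omega
    simp only [eq_false c1, eq_false c2, eq_true c3, eq_false c4, eq_false c5, eq_false c6, eq_false c7, eq_false c8, eq_false c9, eq_false c10, eq_true c11, eq_false c12, if_true, if_false]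
    have c13 : ¬ ((i:ℕ) = 0 ∨ (i:ℕ) = 1) := by omega
    simp only [eq_false c13, if_true, if_false]
    ring1
  by_cases hr4 : (j:ℕ) = (i:ℕ) + 2
  · have c1 : ¬ (((i:ℕ):ℤ) = ((j:ℕ):ℤ)) := by omega
    have c2 : ¬ (((i:ℕ):ℤ) - ((j:ℕ):ℤ) = 1 ∨ ((i:ℕ):ℤ) - ((j:ℕ):ℤ) = -1) := by omega
    have c3 : ((i:ℕ):ℤ) - ((j:ℕ):ℤ) = 2 ∨ ((i:ℕ):ℤ) - ((j:ℕ):ℤ) = -2 := by omega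
    have c4 : ¬ ((i:ℕ) = 0 ∧ (j:ℕ) = M - 1) := by omega
    have c5 : ¬ ((i:ℕ) = 0 ∧ (j:ℕ) = M - 2 ∨ (i:ℕ) = 1 ∧ (j:ℕ) = M - 1) := by omega
    have c6 : ¬ ((j:ℕ) = 0 ∧ (i:ℕ) = M - 1) := by omega
    have c7 : ¬ ((j:ℕ) = 0 ∧ (i:ℕ) = M - 2 ∨ (j:ℕ) = 1 ∧ (i:ℕ) = M - 1) := by omega
    have c8 : ¬ ((i:ℕ) = (j:ℕ)) := by omega
    have c9 : ¬ ((i:ℕ) = (j:ℕ) + 1 ∨ (j:ℕ) + 1 = M ∧ (i:ℕ) = 0) := by omega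
    have c10 : ¬ ((j:ℕ) = (i:ℕ) + 1 ∨ (i:ℕ) + 1 = M ∧ (j:ℕ) = 0) := by omega
    have c11 : ¬ ((i:ℕ) = (j:ℕ) + 2 ∨ (j:ℕ) + 2 = M ∧ (i:ℕ) = 0 ∨ (j:ℕ) + 1 = M ∧ (i:ℕ) = 1) := by omega
    have c12 : (j:ℕ) = (i:ℕ) + 2 ∨ (i:ℕ) + 2 = M ∧ (j:ℕ) = 0 ∨ (i:ℕ) + 1 = M ∧ (j:ℕ) = 1 := by omega
    simp only [eq_false c1, eq_false c2, eq_true c3, eq_false c4, eq_false c5, eq_false c6, eq_false c7, eq_false c8, eq_false c9, eq_false c10, eq_false c11, eq_true c12, if_true, if_false]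
    have c13 : ¬ ((j:ℕ) = 0 ∨ (j:ℕ) = 1) := by omega
    simp only [eq_false c13, if_true, if_false]
    ring1
  by_cases hr5 : (i:ℕ) = 0 ∧ (j:ℕ) = M - 1
  · have c1 : ¬ (((i:ℕ):ℤ) = ((j:ℕ):ℤ)) := by omega
    have c2 : ¬ (((i:ℕ):ℤ) - ((j:ℕ):ℤ) = 1 ∨ ((i:ℕ):ℤ) - ((j:ℕ):ℤ) = -1) := by omega
    have c3 : ¬ (((i:ℕ):ℤ) - ((j:ℕ):ℤ) = 2 ∨ ((i:ℕ):ℤ) - ((j:ℕ):ℤ) = -2) := by omega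
    have c4 : (i:ℕ) = 0 ∧ (j:ℕ) = M - 1 := by omega
    have c5 : ¬ ((i:ℕ) = 0 ∧ (j:ℕ) = M - 2 ∨ (i:ℕ) = 1 ∧ (j:ℕ) = M - 1) := by omega
    have c6 : ¬ ((j:ℕ) = 0 ∧ (i:ℕ) = M - 1) := by omega
    have c7 : ¬ ((j:ℕ) = 0 ∧ (i:ℕ) = M - 2 ∨ (j:ℕ) = 1 ∧ (i:ℕ) = M - 1) := by omega
    have c8 : ¬ ((i:ℕ) = (j:ℕ)) := by omega
    have c9 : (i:ℕ) = (j:ℕ) + 1 ∨ (j:ℕ) + 1 = M ∧ (i:ℕ) = 0 := by omega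
    have c10 : ¬ ((j:ℕ) = (i:ℕ) + 1 ∨ (i:ℕ) + 1 = M ∧ (j:ℕ) = 0) := by omega
    have c11 : ¬ ((i:ℕ) = (j:ℕ) + 2 ∨ (j:ℕ) + 2 = M ∧ (i:ℕ) = 0 ∨ (j:ℕ) + 1 = M ∧ (i:ℕ) = 1) := by omega
    have c12 : ¬ ((j:ℕ) = (i:ℕ) + 2 ∨ (i:ℕ) + 2 = M ∧ (j:ℕ) = 0 ∨ (i:ℕ) + 1 = M ∧ (j:ℕ) = 1) := by omega
    simp only [eq_false c1, eq_false c2, eq_false c3, eq_true c4, eq_false c5, eq_false c6, eq_false c7, eq_false c8, eq_true c9, eq_false c10, eq_false c11, eq_false c12, if_true, if_false]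
    have c13 : (i:ℕ) = 0 := by omega
    simp only [eq_true c13, if_true, if_false]
    ring1
  by_cases hr6 : (j:ℕ) = 0 ∧ (i:ℕ) = M - 1
  · have c1 : ¬ (((i:ℕ):ℤ) = ((j:ℕ):ℤ)) := by omega
    have c2 : ¬ (((i:ℕ):ℤ) - ((j:ℕ):ℤ) = 1 ∨ ((i:ℕ):ℤ) - ((j:ℕ):ℤ) = -1) := by omega
    have c3 : ¬ (((i:ℕ):ℤ) - ((j:ℕ):ℤ) = 2 ∨ ((i:ℕ):ℤ) - ((j:ℕ):ℤ) = -2) := by omega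
    have c4 : ¬ ((i:ℕ) = 0 ∧ (j:ℕ) = M - 1) := by omega
    have c5 : ¬ ((i:ℕ) = 0 ∧ (j:ℕ) = M - 2 ∨ (i:ℕ) = 1 ∧ (j:ℕ) = M - 1) := by omega
    have c6 : (j:ℕ) = 0 ∧ (i:ℕ) = M - 1 := by omega
    have c7 : ¬ ((j:ℕ) = 0 ∧ (i:ℕ) = M - 2 ∨ (j:ℕ) = 1 ∧ (i:ℕ) = M - 1) := by omega
    have c8 : ¬ ((i:ℕ) = (j:ℕ)) := by omega
    have c9 : ¬ ((i:ℕ) = (j:ℕ) + 1 ∨ (j:ℕ) + 1 = M ∧ (i:ℕ) = 0) := by omega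
    have c10 : (j:ℕ) = (i:ℕ) + 1 ∨ (i:ℕ) + 1 = M ∧ (j:ℕ) = 0 := by omega
    have c11 : ¬ ((i:ℕ) = (j:ℕ) + 2 ∨ (j:ℕ) + 2 = M ∧ (i:ℕ) = 0 ∨ (j:ℕ) + 1 = M ∧ (i:ℕ) = 1) := by omega
    have c12 : ¬ ((j:ℕ) = (i:ℕ) + 2 ∨ (i:ℕ) + 2 = M ∧ (j:ℕ) = 0 ∨ (i:ℕ) + 1 = M ∧ (j:ℕ) = 1) := by omega
    simp only [eq_false c1, eq_false c2, eq_false c3, eq_false c4, eq_false c5, eq_true c6, eq_false c7, eq_false c8, eq_false c9, eq_true c10, eq_false c11, eq_false c12, if_true, if_false]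
    have c13 : (j:ℕ) = 0 := by omega
    simp only [eq_true c13, if_true, if_false]
    ring1
  by_cases hr7 : (i:ℕ) = 0 ∧ (j:ℕ) = M - 2 ∨ (i:ℕ) = 1 ∧ (j:ℕ) = M - 1
  · have c1 : ¬ (((i:ℕ):ℤ) = ((j:ℕ):ℤ)) := by omega
    have c2 : ¬ (((i:ℕ):ℤ) - ((j:ℕ):ℤ) = 1 ∨ ((i:ℕ):ℤ) - ((j:ℕ):ℤ) = -1) := by omega
    have c3 : ¬ (((i:ℕ):ℤ) - ((j:ℕ):ℤ) = 2 ∨ ((i:ℕ):ℤ) - ((j:ℕ):ℤ) = -2) := by omega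
    have c4 : ¬ ((i:ℕ) = 0 ∧ (j:ℕ) = M - 1) := by omega
    have c5 : (i:ℕ) = 0 ∧ (j:ℕ) = M - 2 ∨ (i:ℕ) = 1 ∧ (j:ℕ) = M - 1 := by omega
    have c6 : ¬ ((j:ℕ) = 0 ∧ (i:ℕ) = M - 1) := by omega
    have c7 : ¬ ((j:ℕ) = 0 ∧ (i:ℕ) = M - 2 ∨ (j:ℕ) = 1 ∧ (i:ℕ) = M - 1) := by omega
    have c8 : ¬ ((i:ℕ) = (j:ℕ)) := by omega
    have c9 : ¬ ((i:ℕ) = (j:ℕ) + 1 ∨ (j:ℕ) + 1 = M ∧ (i:ℕ) = 0) := by omega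
    have c10 : ¬ ((j:ℕ) = (i:ℕ) + 1 ∨ (i:ℕ) + 1 = M ∧ (j:ℕ) = 0) := by omega
    have c11 : (i:ℕ) = (j:ℕ) + 2 ∨ (j:ℕ) + 2 = M ∧ (i:ℕ) = 0 ∨ (j:ℕ) + 1 = M ∧ (i:ℕ) = 1 := by omega
    have c12 : ¬ ((j:ℕ) = (i:ℕ) + 2 ∨ (i:ℕ) + 2 = M ∧ (j:ℕ) = 0 ∨ (i:ℕ) + 1 = M ∧ (j:ℕ) = 1) := by omega
    simp only [eq_false c1, eq_false c2, eq_false c3, eq_false c4, eq_true c5, eq_false c6, eq_false c7, eq_false c8, eq_false c9, eq_false c10, eq_true c11, eq_false c12, if_true, if_false]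
    have c13 : (i:ℕ) = 0 ∨ (i:ℕ) = 1 := by omega
    simp only [eq_true c13, if_true, if_false]
    ring1
  by_cases hr8 : (j:ℕ) = 0 ∧ (i:ℕ) = M - 2 ∨ (j:ℕ) = 1 ∧ (i:ℕ) = M - 1
  · have c1 : ¬ (((i:ℕ):ℤ) = ((j:ℕ):ℤ)) := by omega
    have c2 : ¬ (((i:ℕ):ℤ) - ((j:ℕ):ℤ) = 1 ∨ ((i:ℕ):ℤ) - ((j:ℕ):ℤ) = -1) := by omega
    have c3 : ¬ (((i:ℕ):ℤ) - ((j:ℕ):ℤ) = 2 ∨ ((i:ℕ):ℤ) - ((j:ℕ):ℤ) = -2) := by omega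
    have c4 : ¬ ((i:ℕ) = 0 ∧ (j:ℕ) = M - 1) := by omega
    have c5 : ¬ ((i:ℕ) = 0 ∧ (j:ℕ) = M - 2 ∨ (i:ℕ) = 1 ∧ (j:ℕ) = M - 1) := by omega
    have c6 : ¬ ((j:ℕ) = 0 ∧ (i:ℕ) = M - 1) := by omega
    have c7 : (j:ℕ) = 0 ∧ (i:ℕ) = M - 2 ∨ (j:ℕ) = 1 ∧ (i:ℕ) = M - 1 := by omega
    have c8 : ¬ ((i:ℕ) = (j:ℕ)) := by omega
    have c9 : ¬ ((i:ℕ) = (j:ℕ) + 1 ∨ (j:ℕ) + 1 = M ∧ (i:ℕ) = 0) := by omega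
    have c10 : ¬ ((j:ℕ) = (i:ℕ) + 1 ∨ (i:ℕ) + 1 = M ∧ (j:ℕ) = 0) := by omega
    have c11 : ¬ ((i:ℕ) = (j:ℕ) + 2 ∨ (j:ℕ) + 2 = M ∧ (i:ℕ) = 0 ∨ (j:ℕ) + 1 = M ∧ (i:ℕ) = 1) := by omega
    have c12 : (j:ℕ) = (i:ℕ) + 2 ∨ (i:ℕ) + 2 = M ∧ (j:ℕ) = 0 ∨ (i:ℕ) + 1 = M ∧ (j:ℕ) = 1 := by omega
    simp only [eq_false c1, eq_false c2, eq_false c3, eq_false c4, eq_false c5, eq_false c6, eq_true c7, eq_false c8, eq_false c9, eq_false c10, eq_false c11, eq_true c12, if_true, if_false]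
    have c13 : (j:ℕ) = 0 ∨ (j:ℕ) = 1 := by omega
    simp only [eq_true c13, if_true, if_false]
    ring1
  have c1 : ¬ (((i:ℕ):ℤ) = ((j:ℕ):ℤ)) := by omega
  have c2 : ¬ (((i:ℕ):ℤ) - ((j:ℕ):ℤ) = 1 ∨ ((i:ℕ):ℤ) - ((j:ℕ):ℤ) = -1) := by omega
  have c3 : ¬ (((i:ℕ):ℤ) - ((j:ℕ):ℤ) = 2 ∨ ((i:ℕ):ℤ) - ((j:ℕ):ℤ) = -2) := by omega
  have c4 : ¬ ((i:ℕ) = 0 ∧ (j:ℕ) = M - 1) := by omega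
  have c5 : ¬ ((i:ℕ) = 0 ∧ (j:ℕ) = M - 2 ∨ (i:ℕ) = 1 ∧ (j:ℕ) = M - 1) := by omega
  have c6 : ¬ ((j:ℕ) = 0 ∧ (i:ℕ) = M - 1) := by omega
  have c7 : ¬ ((j:ℕ) = 0 ∧ (i:ℕ) = M - 2 ∨ (j:ℕ) = 1 ∧ (i:ℕ) = M - 1) := by omega
  have c8 : ¬ ((i:ℕ) = (j:ℕ)) := by omega
  have c9 : ¬ ((i:ℕ) = (j:ℕ) + 1 ∨ (j:ℕ) + 1 = M ∧ (i:ℕ) = 0) := by omega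
  have c10 : ¬ ((j:ℕ) = (i:ℕ) + 1 ∨ (i:ℕ) + 1 = M ∧ (j:ℕ) = 0) := by omega
  have c11 : ¬ ((i:ℕ) = (j:ℕ) + 2 ∨ (j:ℕ) + 2 = M ∧ (i:ℕ) = 0 ∨ (j:ℕ) + 1 = M ∧ (i:ℕ) = 1) := by omega
  have c12 : ¬ ((j:ℕ) = (i:ℕ) + 2 ∨ (i:ℕ) + 2 = M ∧ (j:ℕ) = 0 ∨ (i:ℕ) + 1 = M ∧ (j:ℕ) = 1) := by omega
  simp only [eq_false c1, eq_false c2, eq_false c3, eq_false c4, eq_false c5, eq_false c6, eq_false c7, eq_false c8, eq_false c9, eq_false c10, eq_false c11, eq_false c12, if_true, if_false]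
  ring1

set_option linter.unusedVariables false in
theorem Ahat_posSemidef (M : ℕ) (hM : 5 ≤ M) (κ1 κ2 : ℝ)
    (h1 : 0 < κ1) (h2 : 0 < κ1 + 4 * κ2) (ξ : ℝ) (hξ : ξ ∈ Set.Ioc 0 (2 * Real.pi)) :
    (Ahat M κ1 κ2 ξ).PosSemidef := by
  rw [Ahat_decomp M hM κ1 κ2 ξ]
  set U := Umat M ξ with hUdef
  rcases le_or_gt 0 κ2 with hk | hk
  · exact (psd_term κ1 h1.le _).add (psd_term κ2 hk _)
  · have hU : Uᴴ * U = 1 := UhU M (by omega) ξ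
    have h4 : (1 + U)ᴴ * (1 + U) = 1 + 1 + U + Uᴴ := by
      rw [Matrix.conjTranspose_add, Matrix.conjTranspose_one, Matrix.add_mul, Matrix.one_mul,
        Matrix.mul_add, Matrix.mul_one, hU]
      abel
    have e1 : (1 - U)ᴴ * (1 - U) = 1 + 1 - U - Uᴴ := BB_eq M hM ξ
    have key : (1 - U * U)ᴴ * (1 - U * U)
        = ((1 - U)ᴴ * (1 - U) + (1 - U)ᴴ * (1 - U) + (1 - U)ᴴ * (1 - U) + (1 - U)ᴴ * (1 - U))
          - ((1 - U) * (1 - U))ᴴ * ((1 - U) * (1 - U)) := by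
      have hC : (1 : Matrix (Fin M) (Fin M) ℂ) - U * U = (1 + U) * (1 - U) := by noncomm_ring
      rw [hC, Matrix.conjTranspose_mul]
      calc (1 - U)ᴴ * (1 + U)ᴴ * ((1 + U) * (1 - U))
          = (1 - U)ᴴ * ((1 + U)ᴴ * (1 + U)) * (1 - U) := by
            simp only [Matrix.mul_assoc]
        _ = (1 - U)ᴴ * ((1 + 1 + 1 + 1) - (1 - U)ᴴ * (1 - U)) * (1 - U) := by
            rw [h4, e1]
            noncomm_ring
        _ = _ := by
            rw [Matrix.conjTranspose_mul]
            noncomm_ring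
    rw [key]
    have rearr : (κ1 : ℂ) • ((1 - U)ᴴ * (1 - U))
          + (κ2 : ℂ) • (((1 - U)ᴴ * (1 - U) + (1 - U)ᴴ * (1 - U) + (1 - U)ᴴ * (1 - U)
              + (1 - U)ᴴ * (1 - U))
            - ((1 - U) * (1 - U))ᴴ * ((1 - U) * (1 - U)))
        = ((κ1 + 4 * κ2 : ℝ) : ℂ) • ((1 - U)ᴴ * (1 - U))
          + ((-κ2 : ℝ) : ℂ) • (((1 - U) * (1 - U))ᴴ * ((1 - U) * (1 - U))) := by
      ext i j
      simp only [Matrix.add_apply, Matrix.sub_apply, Matrix.smul_apply, smul_eq_mul]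
      push_cast
      ring
    rw [rearr]
    exact (psd_term (κ1 + 4 * κ2) h2.le _).add (psd_term (-κ2) (by linarith) _)
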